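/- Let X be a {0,1}-valued b×v matrix with b > v > 1 and Φ = [1 | δJ + εX^T] for real δ, ε. There is a choice of δ, ε such that the b+1 columns of Φ form an ETF for R^v with ⟨φ_1,φ_j⟩ > 0 for all j if and only if X is the incidence matrix of a QSD(v,k,λ,r,b,x,y) with 0 < k < v and parameters w = sqrt(v(b+1−v)/b), r = bk/v, λ = r(k−1)/(v−1), x = k − (v+w)(r−λ)/(b+1), y = k − (v−w)(r−λ)/(b+1). -/

import Mathlib

lemma key_ineq (v b : ℕ) (hv : 1 < v) (hvb : v < b) :
    (b:ℝ) * ((b:ℝ)+1-2*v)^2 < ((b:ℝ)-1)^2 * ((v:ℝ) * ((b:ℝ)+1-v)) := by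
  have h : ∀ V M : ℝ, 2 ≤ V → 2 ≤ M →
      (V+M-1) * ((V+M-1)+1-2*V)^2 < ((V+M-1)-1)^2 * (V * ((V+M-1)+1-V)) := by
    intro V M hV hM
    have h1 : (1:ℝ) ≤ (V-1)*(M-1) := by nlinarith
    have h2 : (0:ℝ) ≤ (V-M)^2 := sq_nonneg _
    nlinarith [mul_pos (by linarith : (0:ℝ) < V) (by linarith : (0:ℝ) < M),
      mul_nonneg (by nlinarith : (0:ℝ) ≤ (V-1)*(M-1)) h2,
      mul_nonneg (mul_nonneg (by linarith : (0:ℝ) ≤ V) (by linarith : (0:ℝ) ≤ M)) (by nlinarith : (0:ℝ) ≤ (V-1)*(M-1))]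
  have hM : (2:ℝ) ≤ (b:ℝ)+1-v := by
    have : (v:ℝ) + 1 ≤ b := by exact_mod_cast hvb
    linarith
  have hV : (2:ℝ) ≤ (v:ℝ) := by exact_mod_cast hv
  have h2 := h v ((b:ℝ)+1-v) hV hM
  calc (b:ℝ) * ((b:ℝ)+1-2*v)^2
      = ((v:ℝ)+((b:ℝ)+1-v)-1) * (((v:ℝ)+((b:ℝ)+1-v)-1)+1-2*v)^2 := by ring
  _ < (((v:ℝ)+((b:ℝ)+1-v)-1)-1)^2 * ((v:ℝ)*(((v:ℝ)+((b:ℝ)+1-v)-1)+1-v)) := h2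
  _ = ((b:ℝ)-1)^2 * ((v:ℝ) * ((b:ℝ)+1-v)) := by ring

lemma sum_expand {n : ℕ} (δ ε : ℝ) (f g : Fin n → ℝ) :
    ∑ i, (δ + ε * f i) * (δ + ε * g i)
      = n*δ^2 + δ*ε*(∑ i, f i) + δ*ε*(∑ i, g i) + ε^2 * ∑ i, f i * g i := by
  have h : ∀ i, (δ + ε*f i)*(δ+ε*g i) = δ^2 + (δ*ε*f i + (δ*ε*g i + ε^2*(f i * g i))) := by
    intro i; ring
  simp only [h]
  rw [Finset.sum_add_distrib, Finset.sum_add_distrib, Finset.sum_add_distrib,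
    Finset.sum_const, ← Finset.mul_sum, ← Finset.mul_sum, ← Finset.mul_sum]
  simp [Finset.card_univ]; ring

lemma sum01_nat {n : ℕ} (f : Fin n → ℝ) (h : ∀ i, f i = 0 ∨ f i = 1) :
    ∃ c : ℕ, c ≤ n ∧ (c:ℝ) = ∑ i, f i := by
  classical
  refine ⟨(Finset.univ.filter (fun i => f i = 1)).card, ?_, ?_⟩
  · simpa using (Finset.card_filter_le Finset.univ (fun i => f i = 1))
  · rw [← Finset.sum_boole]
    refine Finset.sum_congr rfl fun i _ => ?_
    rcases h i with h0 | h1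
    · simp [h0]
    · simp [h1]


set_option maxHeartbeats 1000000 in
/-- Characterization of ETFs of the form `Φ = [1 | δJ + εXᵀ]`:  for a `{0,1}`-valued `b × v`
matrix `X` with `b > v > 1`, there exist `δ, ε ∈ ℝ` such that the `b+1` columns of `Φ` form
an ETF for `ℝ^v` with `⟨φ₁, φ_j⟩ > 0` for all `j`, if and only if `X` is the incidence
matrix of a `QSD(v,k,λ,r,b,x,y)` with `0 < k < v` whose parameters satisfy
`w = √(v(b+1−v)/b)`, `r = bk/v`, `λ = r(k−1)/(v−1)`, `x = k − (v+w)(r−λ)/(b+1)`,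
`y = k − (v−w)(r−λ)/(b+1)`. -/
theorem etf_iff_qsd (v b : ℕ) (hvb : v < b) (hv : 1 < v)
    (X : Matrix (Fin b) (Fin v) ℝ)
    (h01 : ∀ i j, X i j = 0 ∨ X i j = 1) :
    (∃ δ ε : ℝ,
      let Φ : Matrix (Fin v) (Fin (b + 1)) ℝ :=
        fun i => Fin.cons 1 (fun j => δ + ε * X j i)
      (∀ j, ∑ i, Φ i j ^ 2 = (v : ℝ)) ∧
      (∃ α : ℝ, 0 < α ∧ Φ * Φ.transpose = α • 1) ∧
      (∃ γ : ℝ, ∀ j j' : Fin (b + 1), j ≠ j' → |∑ i, Φ i j * Φ i j'| = γ) ∧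
      (∀ j, 0 < ∑ i, Φ i 0 * Φ i j))
    ↔
    (∃ k : ℕ, 0 < k ∧ k < v ∧
      let w : ℝ := Real.sqrt ((v : ℝ) * ((b : ℝ) + 1 - v) / b)
      let r : ℝ := (b : ℝ) * k / v
      let lam : ℝ := r * ((k : ℝ) - 1) / ((v : ℝ) - 1)
      let x : ℝ := (k : ℝ) - ((v : ℝ) + w) * (r - lam) / ((b : ℝ) + 1)
      let y : ℝ := (k : ℝ) - ((v : ℝ) - w) * (r - lam) / ((b : ℝ) + 1)
      (∀ i, ∑ j, X i j = (k : ℝ)) ∧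
      (∀ j, ∑ i, X i j = r) ∧
      (∀ j j' : Fin v, j ≠ j' → ∑ i, X i j * X i j' = lam) ∧
      (∀ i i' : Fin b, i ≠ i' →
        (∑ j, X i j * X i' j = x ∨ ∑ j, X i j * X i' j = y)) ∧
      (∃ i i', i ≠ i' ∧ ∑ j, X i j * X i' j = x) ∧
      (∃ i i', i ≠ i' ∧ ∑ j, X i j * X i' j = y)) := by
  constructor
  · intro H
    classical
    obtain ⟨δ, ε, hN, ⟨α, hα, hT⟩, ⟨γ, hE⟩, hP⟩ := H
    set Φ : Matrix (Fin v) (Fin (b + 1)) ℝ :=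
      fun i => Fin.cons 1 (fun j => δ + ε * X j i) with hΦdef
    have hΦ0 : ∀ i, Φ i 0 = 1 := fun i => rfl
    have hΦs : ∀ i (j : Fin b), Φ i j.succ = δ + ε * X j i := fun i j => rfl
    -- basic numeric facts
    have hv0 : (0:ℝ) < v := by exact_mod_cast (by omega : 0 < v)
    have hv1 : (1:ℝ) < v := by exact_mod_cast hv
    have hb0 : (0:ℝ) < b := by exact_mod_cast (by omega : 0 < b)
    have hbv : (v:ℝ) < b := by exact_mod_cast hvb
    have hbv1 : (0:ℝ) < (b:ℝ)+1-v := by linarith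
    set w : ℝ := Real.sqrt ((v : ℝ) * ((b : ℝ) + 1 - v) / b) with hwdef
    have hw2 : w^2 = (v:ℝ) * ((b:ℝ)+1-v)/b := by
      rw [hwdef]; exact Real.sq_sqrt (le_of_lt (div_pos (mul_pos hv0 hbv1) hb0))
    have hwpos : 0 < w := Real.sqrt_pos.2 (div_pos (mul_pos hv0 hbv1) hb0)
    have hwv : w < v := by
      have hlt : w^2 < (v:ℝ)^2 := by
        rw [hw2, div_lt_iff₀ hb0]
        nlinarith [mul_pos hv0 (mul_pos (sub_pos.mpr hv1) (by linarith : (0:ℝ) < (b:ℝ)+1))]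
      nlinarith [hlt, hwpos, hv0]
    -- entries of tightness
    have hTe : ∀ i i', ∑ j, Φ i j * Φ i' j = if i = i' then α else 0 := by
      intro i i'
      have h := congrFun (congrFun hT i) i'
      simpa [Matrix.mul_apply, Matrix.transpose_apply, Matrix.smul_apply,
        Matrix.one_apply, mul_ite, mul_one, mul_zero] using h
    -- frame identity
    have hGsq : ∀ a c : Fin (b+1),
        ∑ j, (∑ i, Φ i a * Φ i j) * (∑ i, Φ i c * Φ i j) = α * ∑ i, Φ i a * Φ i c := by
      intro a c
      calc ∑ j, (∑ i, Φ i a * Φ i j) * (∑ i', Φ i' c * Φ i' j)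
          = ∑ j, ∑ i, ∑ i', (Φ i a * Φ i' c) * (Φ i j * Φ i' j) := by
            refine Finset.sum_congr rfl fun j _ => ?_
            rw [Finset.sum_mul_sum]
            exact Finset.sum_congr rfl fun i _ =>
              Finset.sum_congr rfl fun i' _ => by ring
        _ = ∑ i, ∑ i', (Φ i a * Φ i' c) * ∑ j, Φ i j * Φ i' j := by
            rw [Finset.sum_comm]
            refine Finset.sum_congr rfl fun i _ => ?_
            rw [Finset.sum_comm]
            exact Finset.sum_congr rfl fun i' _ => (Finset.mul_sum _ _ _).symm
        _ = ∑ i, (Φ i a * Φ i c) * α := by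
            refine Finset.sum_congr rfl fun i _ => ?_
            simp only [hTe, mul_ite, mul_zero]
            rw [Finset.sum_ite_eq Finset.univ i (fun i' => Φ i a * Φ i' c * α)]
            simp
        _ = α * ∑ i, Φ i a * Φ i c := by rw [← Finset.sum_mul]; ring
    -- α = b + 1
    have hNm : ∀ j, ∑ i, Φ i j * Φ i j = (v:ℝ) := by
      intro j; have := hN j; simpa [sq] using this
    have hαval : α = (b:ℝ)+1 := by
      have h1 : ∑ i : Fin v, ∑ j, Φ i j * Φ i j = (v:ℝ) * α := by
        have : ∀ i : Fin v, ∑ j, Φ i j * Φ i j = α := by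
          intro i; simpa using hTe i i
        rw [Finset.sum_congr rfl fun i _ => this i]
        simp [Finset.card_univ, mul_comm]
      have h2 : ∑ j : Fin (b+1), ∑ i, Φ i j * Φ i j = ((b:ℝ)+1) * v := by
        rw [Finset.sum_congr rfl fun j _ => hNm j, Finset.sum_const, Finset.card_univ]
        simp only [Fintype.card_fin, nsmul_eq_mul]
        push_cast; ring
      rw [Finset.sum_comm] at h1
      rw [h1] at h2
      have h3 : (v:ℝ) * α = (v:ℝ) * ((b:ℝ)+1) := by rw [h2]; ring
      exact mul_left_cancel₀ hv0.ne' h3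
    -- g notation facts
    have hg00 : ∑ i, Φ i 0 * Φ i 0 = (v:ℝ) := hNm 0
    have hg0s : ∀ j : Fin b, ∑ i, Φ i 0 * Φ i j.succ = (v:ℝ)*δ + ε * ∑ i, X j i := by
      intro j
      calc ∑ i, Φ i 0 * Φ i j.succ = ∑ i, (δ + ε * X j i) := by
            refine Finset.sum_congr rfl fun i _ => ?_
            rw [hΦ0, hΦs, one_mul]
      _ = (v:ℝ)*δ + ε * ∑ i, X j i := by
        rw [Finset.sum_add_distrib, Finset.sum_const, ← Finset.mul_sum]
        simp [Finset.card_univ]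
    have hXsq : ∀ j : Fin b, ∑ i, X j i * X j i = ∑ i, X j i := by
      intro j
      refine Finset.sum_congr rfl fun i _ => ?_
      rcases h01 j i with h0 | h1
      · rw [h0]; ring
      · rw [h1]; ring
    have hgss : ∀ a c : Fin b, ∑ i, Φ i a.succ * Φ i c.succ
        = (v:ℝ)*δ^2 + δ*ε*(∑ i, X a i) + δ*ε*(∑ i, X c i) + ε^2 * ∑ i, X a i * X c i := by
      intro a c
      calc ∑ i, Φ i a.succ * Φ i c.succ = ∑ i, (δ + ε * X a i) * (δ + ε * X c i) := by
            refine Finset.sum_congr rfl fun i _ => ?_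
            rw [hΦs, hΦs]
      _ = _ := sum_expand δ ε _ _
    let i0b : Fin b := ⟨0, by omega⟩
    let i1b : Fin b := ⟨1, by omega⟩
    let i0v : Fin v := ⟨0, by omega⟩
    let i1v : Fin v := ⟨1, by omega⟩
    have ne01b : i0b ≠ i1b := by simp [i0b, i1b, Fin.ext_iff]
    have ne01v : i0v ≠ i1v := by simp [i0v, i1v, Fin.ext_iff]
    have hne0succ : ∀ j : Fin b, (0 : Fin (b+1)) ≠ j.succ := fun j => (Fin.succ_ne_zero j).symm
    -- γ = w
    have hγw : γ = w := by
      have hid := hGsq 0 0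
      rw [hg00, hαval, Fin.sum_univ_succ] at hid
      have habs : ∀ j : Fin b, (∑ i, Φ i 0 * Φ i j.succ) * (∑ i, Φ i 0 * Φ i j.succ) = γ^2 := by
        intro j
        have h := hE 0 j.succ (hne0succ j)
        calc (∑ i, Φ i 0 * Φ i j.succ) * (∑ i, Φ i 0 * Φ i j.succ)
            = |∑ i, Φ i 0 * Φ i j.succ|^2 := by rw [sq_abs]; ring
          _ = γ^2 := by rw [h]
      rw [Finset.sum_congr rfl fun j _ => habs j, Finset.sum_const, Finset.card_univ] at hid
      simp only [Fintype.card_fin, nsmul_eq_mul, hg00] at hid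
      have hγ2 : γ^2 = w^2 := by
        rw [hw2, eq_div_iff hb0.ne']
        linarith [hid]
      have hγnn : 0 ≤ γ := by
        have h := hE 0 (i0b).succ (hne0succ i0b)
        rw [← h]; exact abs_nonneg _
      rcases mul_eq_zero.1 (show (γ-w)*(γ+w) = 0 by linear_combination hγ2) with h | h
      · linarith
      · linarith
    -- constant row sums
    have hRow : ∀ j : Fin b, (v:ℝ)*δ + ε * (∑ i, X j i) = w := by
      intro j
      have h1 := hE 0 j.succ (hne0succ j)
      have h2 := hP j.succ
      rw [hγw, abs_of_pos h2] at h1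
      rw [← hg0s j]
      exact h1
    -- Φ-rows are pairwise distinct
    have hΦrowdiff : ∀ a c : Fin b, a ≠ c → (∀ i, Φ i a.succ = Φ i c.succ) → False := by
      intro a c hac heq
      have hne : a.succ ≠ c.succ := by simpa [Fin.succ_inj] using hac
      have h1 := hE a.succ c.succ hne
      have h2 : ∑ i, Φ i a.succ * Φ i c.succ = (v:ℝ) := by
        rw [← hNm c.succ]
        exact Finset.sum_congr rfl fun i _ => by rw [heq i]
      rw [h2, hγw, abs_of_pos hv0] at h1
      linarith [hwv]
    have hεne : ε ≠ 0 := by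
      intro h0
      refine hΦrowdiff i0b i1b ne01b fun i => ?_
      rw [hΦs, hΦs, h0]
      ring
    obtain ⟨k, hkle, hkeq⟩ := sum01_nat (fun i => X i0b i) (fun i => h01 i0b i)
    have hKc : ∀ j : Fin b, ∑ i, X j i = (k:ℝ) := by
      intro j
      have h1 := hRow j
      have h2 := hRow i0b
      rw [← hkeq] at h2
      have h3 : ε * (∑ i, X j i) = ε * (k:ℝ) := by linarith
      exact mul_left_cancel₀ hεne h3
    -- 0 < k < v
    have hkne0 : (k:ℝ) ≠ 0 := by
      intro h0
      have hz : ∀ (j : Fin b) (i : Fin v), X j i = 0 := by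
        intro j i
        have hnn : ∀ i' ∈ Finset.univ, (0:ℝ) ≤ X j i' := fun i' _ => by
          rcases h01 j i' with h|h <;> simp [h]
        exact (Finset.sum_eq_zero_iff_of_nonneg hnn).1 (by rw [hKc j, h0]) i (Finset.mem_univ i)
      refine hΦrowdiff i0b i1b ne01b fun i => ?_
      rw [hΦs, hΦs, hz i0b i, hz i1b i]
    have hknev : (k:ℝ) ≠ (v:ℝ) := by
      intro h0
      have hone : ∀ (j : Fin b) (i : Fin v), X j i = 1 := by
        intro j i
        have hnn : ∀ i' ∈ Finset.univ, (0:ℝ) ≤ 1 - X j i' := fun i' _ => by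
          rcases h01 j i' with h|h <;> simp [h]
        have hsum : ∑ i', ((1:ℝ) - X j i') = 0 := by
          rw [Finset.sum_sub_distrib, Finset.sum_const, Finset.card_univ, hKc j, h0]
          simp
        have h := (Finset.sum_eq_zero_iff_of_nonneg hnn).1 hsum i (Finset.mem_univ i)
        linarith
      refine hΦrowdiff i0b i1b ne01b fun i => ?_
      rw [hΦs, hΦs, hone i0b i, hone i1b i]
    have hk0 : 0 < k := Nat.pos_of_ne_zero (fun h => hkne0 (by rw [h]; simp))
    have hkv : k < v := lt_of_le_of_ne hkle (fun h => hknev (by rw [h]))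
    have hXXc : ∀ i : Fin v, ∑ j : Fin b, X j i * X j i = ∑ j : Fin b, X j i := by
      intro i
      exact Finset.sum_congr rfl fun j _ => by rcases h01 j i with h|h <;> rw [h] <;> ring
    -- tightness diagonal
    have hTd : ∀ i : Fin v, 1 + ((b:ℝ)*δ^2 + δ*ε*(∑ j : Fin b, X j i) + δ*ε*(∑ j : Fin b, X j i)
        + ε^2 * (∑ j : Fin b, X j i)) = (b:ℝ)+1 := by
      intro i
      have h := hTe i i
      rw [if_pos rfl, hαval, Fin.sum_univ_succ] at h
      have h0 : Φ i 0 * Φ i 0 = 1 := by rw [hΦ0]; ring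
      have hrest : ∑ j : Fin b, Φ i j.succ * Φ i j.succ
          = (b:ℝ)*δ^2 + δ*ε*(∑ j : Fin b, X j i) + δ*ε*(∑ j : Fin b, X j i)
            + ε^2 * (∑ j : Fin b, X j i) := by
        calc ∑ j : Fin b, Φ i j.succ * Φ i j.succ
            = ∑ j : Fin b, (δ + ε * X j i) * (δ + ε * X j i) :=
              Finset.sum_congr rfl fun j _ => by rw [hΦs]
          _ = (b:ℝ)*δ^2 + δ*ε*(∑ j : Fin b, X j i) + δ*ε*(∑ j : Fin b, X j i)
              + ε^2 * ∑ j : Fin b, X j i * X j i := sum_expand δ ε _ _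
          _ = _ := by rw [hXXc i]
      rw [h0, hrest] at h
      exact h
    -- tightness off-diagonal
    have hTo : ∀ i i' : Fin v, i ≠ i' → 1 + ((b:ℝ)*δ^2 + δ*ε*(∑ j : Fin b, X j i)
        + δ*ε*(∑ j : Fin b, X j i') + ε^2 * (∑ j : Fin b, X j i * X j i')) = 0 := by
      intro i i' hii
      have h := hTe i i'
      rw [if_neg hii, Fin.sum_univ_succ] at h
      have h0 : Φ i 0 * Φ i' 0 = 1 := by rw [hΦ0, hΦ0]; ring
      have hrest : ∑ j : Fin b, Φ i j.succ * Φ i' j.succ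
          = (b:ℝ)*δ^2 + δ*ε*(∑ j : Fin b, X j i) + δ*ε*(∑ j : Fin b, X j i')
            + ε^2 * (∑ j : Fin b, X j i * X j i') := by
        calc ∑ j : Fin b, Φ i j.succ * Φ i' j.succ
            = ∑ j : Fin b, (δ + ε * X j i) * (δ + ε * X j i') :=
              Finset.sum_congr rfl fun j _ => by rw [hΦs, hΦs]
          _ = _ := sum_expand δ ε _ _
      rw [h0, hrest] at h
      exact h
    -- column sums are constant, equal to r := b k / v
    have hS : ∑ i : Fin v, (∑ j : Fin b, X j i) = (b:ℝ)*k := by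
      rw [Finset.sum_comm, Finset.sum_congr rfl fun j (_ : j ∈ Finset.univ) => hKc j,
        Finset.sum_const, Finset.card_univ]
      simp only [Fintype.card_fin, nsmul_eq_mul]
    have hΛrow : ∀ i : Fin v, ∑ i' : Fin v, (∑ j : Fin b, X j i * X j i')
        = (k:ℝ) * (∑ j : Fin b, X j i) := by
      intro i
      rw [Finset.sum_comm]
      calc ∑ j : Fin b, ∑ i', X j i * X j i' = ∑ j : Fin b, X j i * (k:ℝ) := by
            refine Finset.sum_congr rfl fun j _ => ?_
            rw [← Finset.mul_sum, hKc j]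
        _ = (k:ℝ) * ∑ j : Fin b, X j i := by rw [← Finset.sum_mul]; ring
    have hRowk : (v:ℝ)*δ + ε*(k:ℝ) = w := by
      have h := hRow i0b
      rw [hKc i0b] at h
      exact h
    have hkey_i : ∀ i : Fin v, (ε*w) * (∑ j : Fin b, X j i)
        = ((b:ℝ)+1) - (v:ℝ)*(1+(b:ℝ)*δ^2) - δ*ε*((b:ℝ)*k) := by
      intro i
      have hsplit : ∑ i' : Fin v, (1 + ((b:ℝ)*δ^2 + δ*ε*(∑ j : Fin b, X j i)
          + δ*ε*(∑ j : Fin b, X j i') + ε^2 * (∑ j : Fin b, X j i * X j i')))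
          = 1 + ((b:ℝ)*δ^2 + δ*ε*(∑ j : Fin b, X j i) + δ*ε*(∑ j : Fin b, X j i)
            + ε^2 * (∑ j : Fin b, X j i * X j i)) := by
        rw [← Finset.add_sum_erase _ _ (Finset.mem_univ i)]
        have hz : ∑ i' ∈ Finset.univ.erase i, (1 + ((b:ℝ)*δ^2 + δ*ε*(∑ j : Fin b, X j i)
            + δ*ε*(∑ j : Fin b, X j i') + ε^2 * (∑ j : Fin b, X j i * X j i'))) = 0 :=
          Finset.sum_eq_zero fun i' hi' => hTo i i' (Ne.symm (Finset.ne_of_mem_erase hi'))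
        rw [hz, add_zero]
      have hexp : ∑ i' : Fin v, (1 + ((b:ℝ)*δ^2 + δ*ε*(∑ j : Fin b, X j i)
          + δ*ε*(∑ j : Fin b, X j i') + ε^2 * (∑ j : Fin b, X j i * X j i')))
          = (v:ℝ)*(1 + (b:ℝ)*δ^2 + δ*ε*(∑ j : Fin b, X j i)) + δ*ε*((b:ℝ)*k)
            + ε^2*((k:ℝ)*(∑ j : Fin b, X j i)) := by
        have hpt : ∀ i' : Fin v, (1 + ((b:ℝ)*δ^2 + δ*ε*(∑ j : Fin b, X j i)
            + δ*ε*(∑ j : Fin b, X j i') + ε^2 * (∑ j : Fin b, X j i * X j i')))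
            = (1 + (b:ℝ)*δ^2 + δ*ε*(∑ j : Fin b, X j i))
              + (δ*ε*(∑ j : Fin b, X j i') + ε^2 * (∑ j : Fin b, X j i * X j i')) := by
          intro i'; ring
        simp only [hpt]
        rw [Finset.sum_add_distrib, Finset.sum_const, Finset.card_univ, Finset.sum_add_distrib,
          ← Finset.mul_sum, ← Finset.mul_sum, hS, hΛrow i]
        simp only [Fintype.card_fin, nsmul_eq_mul]
        ring
      have e1 := hsplit.symm.trans hexp
      have e2 := hTd i
      have e3 := hXXc i
      linear_combination (-1 : ℝ) * e1 + e2 - ε * (∑ j : Fin b, X j i) * hRowk + ε^2 * e3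
    have hεw : ε*w ≠ 0 := mul_ne_zero hεne hwpos.ne'
    have hSval : ∀ i : Fin v, (∑ j : Fin b, X j i) = (b:ℝ)*k/v := by
      intro i
      have hconst : ∀ i' : Fin v, (∑ j : Fin b, X j i') = (∑ j : Fin b, X j i) := by
        intro i'
        have ha := hkey_i i'
        have hb := hkey_i i
        exact mul_left_cancel₀ hεw (by linarith)
      have hvs : (v:ℝ) * (∑ j : Fin b, X j i) = (b:ℝ)*k := by
        rw [← hS, Finset.sum_congr rfl fun i' (_ : i' ∈ Finset.univ) => hconst i',
          Finset.sum_const, Finset.card_univ]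
        simp only [Fintype.card_fin, nsmul_eq_mul]
      rw [eq_div_iff hv0.ne']
      linarith
    have hv1ne : (v:ℝ) - 1 ≠ 0 := by linarith
    have hε2ne : ε^2 ≠ 0 := pow_ne_zero 2 hεne
    have hto2 : ∀ i i' : Fin v, i ≠ i' → ε^2 * (∑ j : Fin b, X j i * X j i')
        = -(1 + (b:ℝ)*δ^2 + 2*(δ*ε)*((b:ℝ)*k/v)) := by
      intro i i' hne
      have h := hTo i i' hne
      rw [hSval i, hSval i'] at h
      linear_combination h
    have hlamval : ∀ i i' : Fin v, i ≠ i' →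
        ∑ j : Fin b, X j i * X j i' = ((b:ℝ)*k/v) * ((k:ℝ)-1)/((v:ℝ)-1) := by
      have hsum := hΛrow i0v
      rw [hSval i0v, ← Finset.add_sum_erase _ _ (Finset.mem_univ i0v)] at hsum
      have hdiag : ∑ j : Fin b, X j i0v * X j i0v = (b:ℝ)*k/v := by
        rw [hXXc i0v, hSval i0v]
      rw [hdiag] at hsum
      have herase : ε^2 * ∑ i' ∈ Finset.univ.erase i0v, (∑ j : Fin b, X j i0v * X j i')
          = ((v:ℝ)-1) * (-(1 + (b:ℝ)*δ^2 + 2*(δ*ε)*((b:ℝ)*k/v))) := by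
        rw [Finset.mul_sum, Finset.sum_congr rfl fun i' hi' =>
          hto2 i0v i' (Ne.symm (Finset.ne_of_mem_erase hi')), Finset.sum_const,
          Finset.card_erase_of_mem (Finset.mem_univ i0v), Finset.card_univ]
        simp only [Fintype.card_fin, nsmul_eq_mul]
        rw [Nat.cast_sub (by omega : 1 ≤ v)]
        push_cast
        ring
      intro i i' hne
      have h := hto2 i i' hne
      have hC : ((v:ℝ)-1) * (-(1 + (b:ℝ)*δ^2 + 2*(δ*ε)*((b:ℝ)*k/v)))
          = ε^2 * (((k:ℝ)-1) * ((b:ℝ)*k/v)) := by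
        rw [← herase]
        have he2 : ∑ i' ∈ Finset.univ.erase i0v, (∑ j : Fin b, X j i0v * X j i')
            = (k:ℝ) * ((b:ℝ)*k/v) - (b:ℝ)*k/v := by linarith [hsum]
        rw [he2]
        ring
      rw [eq_div_iff hv1ne]
      apply mul_left_cancel₀ hε2ne
      rw [show ε^2 * ((∑ j : Fin b, X j i * X j i') * ((v:ℝ)-1))
        = (ε^2 * (∑ j : Fin b, X j i * X j i')) * ((v:ℝ)-1) from by ring, h]
      linear_combination hC
    have hA : ε^2 * ((b:ℝ)*k/v - ((b:ℝ)*k/v) * ((k:ℝ)-1)/((v:ℝ)-1)) = (b:ℝ)+1 := by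
      have hd := hTd i0v
      rw [hSval i0v] at hd
      have hl := hto2 i0v i1v ne01v
      rw [hlamval i0v i1v ne01v] at hl
      linear_combination hd - hl
    -- intersection values
    have hNrm2 : (v:ℝ)*δ^2 + 2*(δ*ε)*(k:ℝ) + ε^2*(k:ℝ) = (v:ℝ) := by
      have h := hNm i0b.succ
      rw [hgss i0b i0b, hKc i0b, hXsq i0b, hKc i0b] at h
      linear_combination h
    have hgval : ∀ a c : Fin b, (∑ i, Φ i a.succ * Φ i c.succ)
        = (v:ℝ)*δ^2 + 2*(δ*ε)*(k:ℝ) + ε^2 * (∑ i, X a i * X c i) := by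
      intro a c
      rw [hgss a c, hKc a, hKc c]
      ring
    set x : ℝ := (k:ℝ) - ((v:ℝ)+w)*((b:ℝ)*k/v - ((b:ℝ)*k/v)*((k:ℝ)-1)/((v:ℝ)-1))/((b:ℝ)+1) with hxdef
    set y : ℝ := (k:ℝ) - ((v:ℝ)-w)*((b:ℝ)*k/v - ((b:ℝ)*k/v)*((k:ℝ)-1)/((v:ℝ)-1))/((b:ℝ)+1) with hydef
    have hb1pos : (0:ℝ) < (b:ℝ)+1 := by linarith
    have hdiv : ∀ t : ℝ, ε^2 * (t * ((b:ℝ)*k/v - ((b:ℝ)*k/v)*((k:ℝ)-1)/((v:ℝ)-1))/((b:ℝ)+1)) = t := by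
      intro t
      calc ε^2 * (t * ((b:ℝ)*k/v - ((b:ℝ)*k/v)*((k:ℝ)-1)/((v:ℝ)-1))/((b:ℝ)+1))
          = t * (ε^2 * ((b:ℝ)*k/v - ((b:ℝ)*k/v)*((k:ℝ)-1)/((v:ℝ)-1)))/((b:ℝ)+1) := by ring
        _ = t * ((b:ℝ)+1)/((b:ℝ)+1) := by rw [hA]
        _ = t := by rw [mul_div_assoc, div_self hb1pos.ne', mul_one]
    have hε2x : ε^2 * x = ε^2*(k:ℝ) - ((v:ℝ)+w) := by
      rw [hxdef, mul_sub, hdiv ((v:ℝ)+w)]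
    have hε2y : ε^2 * y = ε^2*(k:ℝ) - ((v:ℝ)-w) := by
      rw [hydef, mul_sub, hdiv ((v:ℝ)-w)]
    have hsucc_ne : ∀ a c : Fin b, a ≠ c → a.succ ≠ c.succ := fun a c hac => by
      simpa [Fin.succ_inj] using hac
    have hsx : ∀ a c : Fin b, a ≠ c →
        (∑ i, X a i * X c i) = x ∨ (∑ i, X a i * X c i) = y := by
      intro a c hac
      have habs := hE a.succ c.succ (hsucc_ne a c hac)
      rw [hγw] at habs
      rcases (abs_eq (le_of_lt hwpos)).1 habs with hgw | hgw
      · right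
        have h := (hgval a c).symm.trans hgw
        apply mul_left_cancel₀ hε2ne
        linear_combination h - hNrm2 - hε2y
      · left
        have h := (hgval a c).symm.trans hgw
        apply mul_left_cancel₀ hε2ne
        linear_combination h - hNrm2 - hε2x
    have hg_of_x : ∀ a c : Fin b, (∑ i, X a i * X c i) = x →
        (∑ i, Φ i a.succ * Φ i c.succ) = -w := by
      intro a c hs
      rw [hgval a c, hs]
      linear_combination hNrm2 + hε2x
    have hg_of_y : ∀ a c : Fin b, (∑ i, X a i * X c i) = y →
        (∑ i, Φ i a.succ * Φ i c.succ) = w := by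
      intro a c hs
      rw [hgval a c, hs]
      linear_combination hNrm2 + hε2y
    -- both intersection numbers are attained
    have hg0succ : ∀ j : Fin b, ∑ i, Φ i 0 * Φ i j.succ = w := by
      intro j; rw [hg0s j]; exact hRow j
    have hcontra : ∀ σ : ℝ, σ^2 = 1 →
        (∀ a c : Fin b, a ≠ c → (∑ i, Φ i a.succ * Φ i c.succ) = σ * w) → False := by
      intro σ hσ2 hall
      have hgsymm : ∀ a c : Fin (b+1), (∑ i, Φ i a * Φ i c) = ∑ i, Φ i c * Φ i a :=
        fun a c => Finset.sum_congr rfl fun i _ => mul_comm _ _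
      have hid := hGsq 0 i0b.succ
      rw [hαval] at hid
      have hsub : ({0, i0b.succ} : Finset (Fin (b+1))) ⊆ Finset.univ := Finset.subset_univ _
      rw [← Finset.sum_sdiff hsub, Finset.sum_pair (hne0succ i0b)] at hid
      have hF0 : (∑ i, Φ i 0 * Φ i 0) * (∑ i, Φ i i0b.succ * Φ i 0) = (v:ℝ) * w := by
        rw [hg00, hgsymm i0b.succ 0, hg0succ i0b]
      have hFe : (∑ i, Φ i 0 * Φ i i0b.succ) * (∑ i, Φ i i0b.succ * Φ i i0b.succ)
          = w * (v:ℝ) := by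
        rw [hg0succ i0b, hNm]
      have hrest : ∀ jj ∈ Finset.univ \ ({0, i0b.succ} : Finset (Fin (b+1))),
          (∑ i, Φ i 0 * Φ i jj) * (∑ i, Φ i i0b.succ * Φ i jj) = w * (σ * w) := by
        intro jj hjj
        rw [Finset.mem_sdiff, Finset.mem_insert, Finset.mem_singleton] at hjj
        obtain ⟨-, hjj⟩ := hjj
        have hjj0 : jj ≠ 0 := fun h => hjj (Or.inl h)
        have hjj1 : jj ≠ i0b.succ := fun h => hjj (Or.inr h)
        obtain ⟨c, rfl⟩ := Fin.eq_succ_of_ne_zero hjj0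
        have hci : i0b ≠ c := fun h => hjj1 (by rw [h])
        rw [hg0succ c, hall i0b c hci]
      rw [Finset.sum_congr rfl hrest, Finset.sum_const] at hid
      have hcard : (Finset.univ \ ({0, i0b.succ} : Finset (Fin (b+1)))).card = b - 1 := by
        rw [Finset.card_sdiff_of_subset hsub, Finset.card_univ, Finset.card_pair (hne0succ i0b)]
        simp only [Fintype.card_fin]
        omega
      rw [hcard, hF0, hFe, nsmul_eq_mul, hg0succ i0b] at hid
      have hb1R : ((b - 1 : ℕ) : ℝ) = (b:ℝ) - 1 := by
        rw [Nat.cast_sub (by omega : 1 ≤ b)]; simp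
      rw [hb1R] at hid
      have hlin : ((b:ℝ)-1) * (σ*w) + 2*(v:ℝ) = (b:ℝ)+1 := by
        have h := mul_right_cancel₀ hwpos.ne'
          (show (((b:ℝ)-1)*(σ*w) + 2*(v:ℝ)) * w = ((b:ℝ)+1) * w by linear_combination hid)
        exact h
      have h2 : ((b:ℝ)-1)*(σ*w) = (b:ℝ)+1-2*(v:ℝ) := by linarith
      have hsq : (((b:ℝ)-1)*w)^2 = ((b:ℝ)+1-2*(v:ℝ))^2 := by
        have h3 : (((b:ℝ)-1)*(σ*w))^2 = ((b:ℝ)+1-2*(v:ℝ))^2 := by rw [h2]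
        linear_combination h3 - ((b:ℝ)-1)^2*w^2 * hσ2
      have hw2' : (b:ℝ)*w^2 = (v:ℝ)*((b:ℝ)+1-(v:ℝ)) := by
        rw [hw2]; field_simp
      have hfin : (b:ℝ)*((b:ℝ)+1-2*(v:ℝ))^2 = ((b:ℝ)-1)^2 * ((v:ℝ)*((b:ℝ)+1-(v:ℝ))) := by
        linear_combination (-(b:ℝ))*hsq + ((b:ℝ)-1)^2 * hw2'
      have hki := key_ineq v b hv hvb
      linarith
    have hex_x : ∃ a c : Fin b, a ≠ c ∧ (∑ i, X a i * X c i) = x := by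
      by_contra hno
      push_neg at hno
      refine hcontra 1 (by norm_num) fun a c hac => ?_
      rcases hsx a c hac with h | h
      · exact absurd h (hno a c hac)
      · rw [one_mul]; exact hg_of_y a c h
    have hex_y : ∃ a c : Fin b, a ≠ c ∧ (∑ i, X a i * X c i) = y := by
      by_contra hno
      push_neg at hno
      refine hcontra (-1) (by norm_num) fun a c hac => ?_
      rcases hsx a c hac with h | h
      · rw [show (-1:ℝ)*w = -w from by ring]; exact hg_of_x a c h
      · exact absurd h (hno a c hac)
    exact ⟨k, hk0, hkv, hKc, hSval, hlamval, hsx, hex_x, hex_y⟩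
  · intro H
    classical
    obtain ⟨k, hk0, hkv, hrow, hcol, hlam, hint, -, -⟩ := H
    have hv0 : (0:ℝ) < v := by exact_mod_cast (by omega : 0 < v)
    have hv1 : (1:ℝ) < v := by exact_mod_cast hv
    have hb0 : (0:ℝ) < b := by exact_mod_cast (by omega : 0 < b)
    have hbv : (v:ℝ) < b := by exact_mod_cast hvb
    have hbv1 : (0:ℝ) < (b:ℝ)+1-v := by linarith
    have hk0R : (0:ℝ) < (k:ℝ) := by exact_mod_cast hk0
    have hkvR : (k:ℝ) < (v:ℝ) := by exact_mod_cast hkv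
    have hb1pos : (0:ℝ) < (b:ℝ)+1 := by linarith
    set w : ℝ := Real.sqrt ((v : ℝ) * ((b : ℝ) + 1 - v) / b) with hwdef
    have hw2 : w^2 = (v:ℝ) * ((b:ℝ)+1-v)/b := by
      rw [hwdef]; exact Real.sq_sqrt (le_of_lt (div_pos (mul_pos hv0 hbv1) hb0))
    have hwpos : 0 < w := Real.sqrt_pos.2 (div_pos (mul_pos hv0 hbv1) hb0)
    set r : ℝ := (b : ℝ) * k / v with hrdef
    set lam : ℝ := r * ((k : ℝ) - 1) / ((v : ℝ) - 1) with hlamdef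
    have hv1ne : (v:ℝ) - 1 ≠ 0 := by linarith
    have hvne : (v:ℝ) ≠ 0 := hv0.ne'
    have hrv : r * v = (b:ℝ)*k := by rw [hrdef]; field_simp
    have hvv1 : (0:ℝ) < (v:ℝ)*((v:ℝ)-1) := mul_pos hv0 (by linarith)
    have hrlm : (r - lam) * ((v:ℝ)*((v:ℝ)-1)) = (b:ℝ)*(k:ℝ)*((v:ℝ)-(k:ℝ)) := by
      calc (r - lam) * ((v:ℝ)*((v:ℝ)-1))
          = (r*v)*((v:ℝ)-1) - (r*((k:ℝ)-1)/((v:ℝ)-1))*((v:ℝ)-1)*(v:ℝ) := by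
            rw [hlamdef]; ring
        _ = (r*v)*((v:ℝ)-1) - (r*((k:ℝ)-1))*(v:ℝ) := by rw [div_mul_cancel₀ _ hv1ne]
        _ = (r*v)*((v:ℝ)-1) - (r*v)*((k:ℝ)-1) := by ring
        _ = ((b:ℝ)*k)*((v:ℝ)-1) - ((b:ℝ)*k)*((k:ℝ)-1) := by rw [hrv]
        _ = (b:ℝ)*(k:ℝ)*((v:ℝ)-(k:ℝ)) := by ring
    have hrlpos : 0 < r - lam := by
      have hq : (0:ℝ) < (b:ℝ)*(k:ℝ)*((v:ℝ)-(k:ℝ)) := mul_pos (mul_pos hb0 hk0R) (by linarith)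
      have heq : r - lam = ((b:ℝ)*(k:ℝ)*((v:ℝ)-(k:ℝ)))/((v:ℝ)*((v:ℝ)-1)) := by
        rw [eq_div_iff hvv1.ne']
        exact hrlm
      rw [heq]
      exact div_pos hq hvv1
    set ε : ℝ := Real.sqrt (((b:ℝ)+1)/(r - lam)) with hεdef
    have hε2 : ε^2 = ((b:ℝ)+1)/(r - lam) := by
      rw [hεdef]; exact Real.sq_sqrt (le_of_lt (div_pos hb1pos hrlpos))
    have hεpos : 0 < ε := Real.sqrt_pos.2 (div_pos hb1pos hrlpos)
    set δ : ℝ := (w - ε*(k:ℝ))/(v:ℝ) with hδdef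
    have h1 : (v:ℝ)*δ + ε*(k:ℝ) = w := by
      rw [hδdef]; field_simp; ring
    have hδv : (v:ℝ)*δ = w - ε*(k:ℝ) := by linarith
    have hA : ε^2 * (r - lam) = (b:ℝ)+1 := by
      rw [hε2]; field_simp
    have hεkv : ε^2 * ((b:ℝ)*(k:ℝ)*((v:ℝ)-(k:ℝ))) = ((b:ℝ)+1)*((v:ℝ)*((v:ℝ)-1)) := by
      calc ε^2 * ((b:ℝ)*(k:ℝ)*((v:ℝ)-(k:ℝ)))
          = ε^2 * ((r - lam) * ((v:ℝ)*((v:ℝ)-1))) := by rw [hrlm]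
        _ = (ε^2*(r - lam)) * ((v:ℝ)*((v:ℝ)-1)) := by ring
        _ = ((b:ℝ)+1)*((v:ℝ)*((v:ℝ)-1)) := by rw [hA]
    have hw2' : (b:ℝ)*w^2 = (v:ℝ)*((b:ℝ)+1-(v:ℝ)) := by
      rw [hw2]; field_simp
    have hmain : w^2 + ε^2*((k:ℝ)*((v:ℝ)-(k:ℝ))) = (v:ℝ)^2 := by
      have hG : (b:ℝ) * (w^2 + ε^2*((k:ℝ)*((v:ℝ)-(k:ℝ)))) = (b:ℝ) * (v:ℝ)^2 := by
        calc (b:ℝ) * (w^2 + ε^2*((k:ℝ)*((v:ℝ)-(k:ℝ))))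
            = (b:ℝ)*w^2 + ε^2*((b:ℝ)*(k:ℝ)*((v:ℝ)-(k:ℝ))) := by ring
          _ = (v:ℝ)*((b:ℝ)+1-(v:ℝ)) + ((b:ℝ)+1)*((v:ℝ)*((v:ℝ)-1)) := by rw [hw2', hεkv]
          _ = (b:ℝ)*(v:ℝ)^2 := by ring
      exact mul_left_cancel₀ hb0.ne' hG
    have h2 : (v:ℝ)*δ^2 + 2*(δ*ε)*(k:ℝ) + ε^2*(k:ℝ) = (v:ℝ) := by
      have hG : (v:ℝ) * ((v:ℝ)*δ^2 + 2*(δ*ε)*(k:ℝ) + ε^2*(k:ℝ)) = (v:ℝ) * (v:ℝ) := by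
        calc (v:ℝ) * ((v:ℝ)*δ^2 + 2*(δ*ε)*(k:ℝ) + ε^2*(k:ℝ))
            = ((v:ℝ)*δ)^2 + 2*((v:ℝ)*δ)*(ε*(k:ℝ)) + (v:ℝ)*ε^2*(k:ℝ) := by ring
          _ = (w - ε*(k:ℝ))^2 + 2*(w - ε*(k:ℝ))*(ε*(k:ℝ)) + (v:ℝ)*ε^2*(k:ℝ) := by rw [hδv]
          _ = w^2 + ε^2*((k:ℝ)*((v:ℝ)-(k:ℝ))) := by ring
          _ = (v:ℝ)^2 := hmain
          _ = (v:ℝ)*(v:ℝ) := sq (v:ℝ)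
      exact mul_left_cancel₀ hv0.ne' hG
    set Φ : Matrix (Fin v) (Fin (b + 1)) ℝ :=
      fun i => Fin.cons 1 (fun j => δ + ε * X j i) with hΦdef
    have hΦ0 : ∀ i, Φ i 0 = 1 := fun i => rfl
    have hΦs : ∀ i (j : Fin b), Φ i j.succ = δ + ε * X j i := fun i j => rfl
    have hXsq : ∀ a : Fin b, ∑ i, X a i * X a i = (k:ℝ) := by
      intro a
      rw [← hrow a]
      exact Finset.sum_congr rfl fun i _ => by rcases h01 a i with h|h <;> rw [h] <;> ring
    have hXXc : ∀ i : Fin v, ∑ j : Fin b, X j i * X j i = r := by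
      intro i
      rw [← hcol i]
      exact Finset.sum_congr rfl fun j _ => by rcases h01 j i with h|h <;> rw [h] <;> ring
    have hDiagId : 1 + ((b:ℝ)*δ^2 + δ*ε*r + δ*ε*r + ε^2*r) = (b:ℝ)+1 := by
      have hmul : (v:ℝ) * (1 + ((b:ℝ)*δ^2 + δ*ε*r + δ*ε*r + ε^2*r)) = (v:ℝ)*((b:ℝ)+1) := by
        linear_combination (b:ℝ)*h2 + (2*(δ*ε) + ε^2)*hrv
      exact mul_left_cancel₀ hvne hmul
    have hOffId : 1 + ((b:ℝ)*δ^2 + δ*ε*r + δ*ε*r + ε^2*lam) = 0 := by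
      linear_combination hDiagId - hA
    have hdiv : ∀ t : ℝ, ε^2 * (t * (r - lam)/((b:ℝ)+1)) = t := by
      intro t
      calc ε^2 * (t * (r - lam)/((b:ℝ)+1))
          = t * (ε^2 * (r - lam))/((b:ℝ)+1) := by ring
        _ = t * ((b:ℝ)+1)/((b:ℝ)+1) := by rw [hA]
        _ = t := by rw [mul_div_assoc, div_self hb1pos.ne', mul_one]
    have hε2x : ε^2 * ((k:ℝ) - ((v:ℝ)+w)*(r-lam)/((b:ℝ)+1)) = ε^2*(k:ℝ) - ((v:ℝ)+w) := by
      rw [mul_sub, hdiv ((v:ℝ)+w)]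
    have hε2y : ε^2 * ((k:ℝ) - ((v:ℝ)-w)*(r-lam)/((b:ℝ)+1)) = ε^2*(k:ℝ) - ((v:ℝ)-w) := by
      rw [mul_sub, hdiv ((v:ℝ)-w)]
    -- norms
    have c1 : ∀ j : Fin (b+1), ∑ i, Φ i j ^ 2 = (v:ℝ) := by
      intro j
      rcases Fin.eq_zero_or_eq_succ j with rfl | ⟨a, rfl⟩
      · calc ∑ i, Φ i 0^2 = ∑ _i : Fin v, (1:ℝ) :=
          Finset.sum_congr rfl fun i _ => by rw [hΦ0]; norm_num
        _ = (v:ℝ) := by simp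
      · calc ∑ i, Φ i a.succ^2 = ∑ i, (δ + ε * X a i) * (δ + ε * X a i) :=
            Finset.sum_congr rfl fun i _ => by rw [hΦs]; ring
        _ = (v:ℝ)*δ^2 + δ*ε*(∑ i, X a i) + δ*ε*(∑ i, X a i) + ε^2 * ∑ i, X a i * X a i :=
            sum_expand δ ε _ _
        _ = (v:ℝ) := by rw [hrow a, hXsq a]; linear_combination h2
    -- tightness
    have c2 : Φ * Φ.transpose = ((b:ℝ)+1) • (1 : Matrix (Fin v) (Fin v) ℝ) := by
      refine Matrix.ext fun i i' => ?_
      rw [Matrix.mul_apply]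
      simp only [Matrix.transpose_apply]
      rw [Fin.sum_univ_succ]
      rw [show Φ i 0 * Φ i' 0 = 1 from by rw [hΦ0, hΦ0]; ring]
      have hrest : ∑ j : Fin b, Φ i j.succ * Φ i' j.succ
          = (b:ℝ)*δ^2 + δ*ε*(∑ j : Fin b, X j i) + δ*ε*(∑ j : Fin b, X j i')
            + ε^2 * ∑ j : Fin b, X j i * X j i' := by
        calc ∑ j : Fin b, Φ i j.succ * Φ i' j.succ
            = ∑ j : Fin b, (δ + ε * X j i) * (δ + ε * X j i') :=
              Finset.sum_congr rfl fun j _ => by rw [hΦs, hΦs]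
          _ = _ := sum_expand δ ε _ _
      rw [hrest, hcol i, hcol i']
      rw [Matrix.smul_apply, Matrix.one_apply]
      by_cases hii : i = i'
      · subst hii
        rw [if_pos rfl, hXXc i, smul_eq_mul, mul_one]
        exact hDiagId
      · rw [if_neg hii, hlam i i' hii, smul_eq_mul, mul_zero]
        exact hOffId
    -- inner products with the first column
    have hg0succ : ∀ a : Fin b, ∑ i, Φ i 0 * Φ i a.succ = w := by
      intro a
      calc ∑ i, Φ i 0 * Φ i a.succ = ∑ i, (δ + ε * X a i) :=
            Finset.sum_congr rfl fun i _ => by rw [hΦ0, hΦs, one_mul]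
        _ = (v:ℝ)*δ + ε * ∑ i, X a i := by
            rw [Finset.sum_add_distrib, Finset.sum_const, ← Finset.mul_sum]
            simp [Finset.card_univ]
        _ = w := by rw [hrow a]; exact h1
    have hgss : ∀ a c : Fin b, ∑ i, Φ i a.succ * Φ i c.succ
        = (v:ℝ)*δ^2 + δ*ε*(∑ i, X a i) + δ*ε*(∑ i, X c i) + ε^2 * ∑ i, X a i * X c i := by
      intro a c
      calc ∑ i, Φ i a.succ * Φ i c.succ = ∑ i, (δ + ε * X a i) * (δ + ε * X c i) :=
            Finset.sum_congr rfl fun i _ => by rw [hΦs, hΦs]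
        _ = _ := sum_expand δ ε _ _
    have hg_of_x : ∀ a c : Fin b,
        (∑ i, X a i * X c i) = (k:ℝ) - ((v:ℝ)+w)*(r-lam)/((b:ℝ)+1) →
        (∑ i, Φ i a.succ * Φ i c.succ) = -w := by
      intro a c hs
      rw [hgss a c, hrow a, hrow c, hs]
      linear_combination h2 + hε2x
    have hg_of_y : ∀ a c : Fin b,
        (∑ i, X a i * X c i) = (k:ℝ) - ((v:ℝ)-w)*(r-lam)/((b:ℝ)+1) →
        (∑ i, Φ i a.succ * Φ i c.succ) = w := by
      intro a c hs
      rw [hgss a c, hrow a, hrow c, hs]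
      linear_combination h2 + hε2y
    have c3 : ∀ j j' : Fin (b+1), j ≠ j' → |∑ i, Φ i j * Φ i j'| = w := by
      intro j j' hne
      rcases Fin.eq_zero_or_eq_succ j with rfl | ⟨a, rfl⟩
      · rcases Fin.eq_zero_or_eq_succ j' with rfl | ⟨c, rfl⟩
        · exact absurd rfl hne
        · rw [hg0succ c, abs_of_pos hwpos]
      · rcases Fin.eq_zero_or_eq_succ j' with rfl | ⟨c, rfl⟩
        · rw [show ∑ i, Φ i a.succ * Φ i 0 = ∑ i, Φ i 0 * Φ i a.succ from
            Finset.sum_congr rfl fun i _ => mul_comm _ _, hg0succ a, abs_of_pos hwpos]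
        · have hac : a ≠ c := fun h => hne (by rw [h])
          rcases hint a c hac with hxx | hyy
          · rw [hg_of_x a c hxx, abs_neg, abs_of_pos hwpos]
          · rw [hg_of_y a c hyy, abs_of_pos hwpos]
    have c4 : ∀ j : Fin (b+1), 0 < ∑ i, Φ i 0 * Φ i j := by
      intro j
      rcases Fin.eq_zero_or_eq_succ j with rfl | ⟨a, rfl⟩
      · have : ∑ i, Φ i 0 * Φ i 0 = (v:ℝ) := by
          calc ∑ i, Φ i 0 * Φ i 0 = ∑ _i : Fin v, (1:ℝ) :=
              Finset.sum_congr rfl fun i _ => by rw [hΦ0]; ring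
            _ = (v:ℝ) := by simp
        rw [this]; exact hv0
      · rw [hg0succ a]; exact hwpos
    exact ⟨δ, ε, c1, ⟨(b:ℝ)+1, by linarith, c2⟩, ⟨w, c3⟩, c4⟩
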